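/- If a palindromic substring w of a string S is not left-maximal in S (i.e., there exists a palindromic substring w' of S containing w as a proper suffix), then w occurs at least twice in S. -/

import Mathlib

def occCount {α : Type*} [DecidableEq α] (S w : List α) : ℕ :=
  ((List.range (S.length + 1)).filter (fun i => decide (w <+: S.drop i))).length

theorem not_left_maximal_repeats {α : Type*} [DecidableEq α]
    (S w : List α) (hw : w <:+: S) (hwpal : w.reverse = w)
    (h : ∃ w', w' <:+: S ∧ w'.reverse = w' ∧ w <:+ w' ∧ w ≠ w') :
    2 ≤ occCount S w := by
  obtain ⟨w', hinf, hpal', hsuf, hne⟩ := h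
  obtain ⟨t, ht⟩ := hsuf
  obtain ⟨a, b, hS⟩ := hinf
  have hpre : w <+: w' := by
    have h1 : w.reverse <+: w'.reverse := by
      rw [List.reverse_prefix]
      exact ⟨t, ht⟩
    rwa [hwpal, hpal'] at h1
  have ht0 : 0 < t.length := by
    rcases t with _ | ⟨x, t⟩
    · exfalso; apply hne; simpa using ht
    · simp
  set i1 := a.length with hi1
  set i2 := a.length + t.length with hi2
  have hocc1 : w <+: S.drop i1 := by
    rw [← hS, List.append_assoc, hi1, List.drop_left]
    exact hpre.trans ⟨b, rfl⟩
  have hocc2 : w <+: S.drop i2 := by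
    have : S.drop i2 = w ++ b := by
      rw [← hS, ← ht, hi2, List.append_assoc, List.append_assoc,
        ← @List.length_append _ a t, ← List.append_assoc a t, List.drop_left]
    rw [this]; exact ⟨b, rfl⟩
  have hle2 : i2 ≤ S.length := by
    rw [← hS]
    simp only [List.length_append]
    have : t.length ≤ w'.length := by rw [← ht]; simp
    omega
  have hmem1 : i1 ∈ (List.range (S.length + 1)).filter
      (fun i => decide (w <+: S.drop i)) := by
    rw [List.mem_filter, List.mem_range]
    exact ⟨by omega, by simpa using hocc1⟩
  have hmem2 : i2 ∈ (List.range (S.length + 1)).filter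
      (fun i => decide (w <+: S.drop i)) := by
    rw [List.mem_filter, List.mem_range]
    exact ⟨by omega, by simpa using hocc2⟩
  have hnd : ((List.range (S.length + 1)).filter
      (fun i => decide (w <+: S.drop i))).Nodup :=
    List.nodup_range.filter _
  have hne12 : i1 ≠ i2 := by omega
  unfold occCount
  rcases List.mem_iff_get.mp hmem1 with ⟨n1, hn1⟩
  rcases List.mem_iff_get.mp hmem2 with ⟨n2, hn2⟩
  have : n1 ≠ n2 := by intro h; apply hne12; rw [← hn1, ← hn2, h]
  have h1 := n1.isLt
  have h2 := n2.isLt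
  omega
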